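/- Let (K, Γ, k; v) be an extremal valued field. Then for every nonzero convex subgroup Δ of Γ, the quotient group Γ/Δ is divisible. -/

import Mathlib

/-- A valued field is *extremal* if every multivariable polynomial attains a maximal
value (in `Γ ∪ {∞}`) on tuples from the valuation ring. -/
def IsExtremal {K Γ : Type*} [Field K] [AddCommGroup Γ] [LinearOrder Γ] [IsOrderedAddMonoid Γ]
    (v : AddValuation K (WithTop Γ)) : Prop :=
  ∀ (n : ℕ) (F : MvPolynomial (Fin n) K), ∃ a : Fin n → K,
    (∀ i, 0 ≤ v (a i)) ∧ ∀ b : Fin n → K, (∀ i, 0 ≤ v (b i)) →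
      v (MvPolynomial.eval b F) ≤ v (MvPolynomial.eval a F)

section Aux

variable {K Γ : Type*} [Field K] [AddCommGroup Γ] [LinearOrder Γ] [IsOrderedAddMonoid Γ]
  (v : AddValuation K (WithTop Γ))

/-- On a field, nonzero elements have finite (additive) valuation. -/
lemma AddValuation.ne_top_of_ne_zero {x : K} (hx : x ≠ 0) : v x ≠ ⊤ := by
  intro htop
  have h1 : v (x * x⁻¹) = v x + v x⁻¹ := v.map_mul _ _
  rw [mul_inv_cancel₀ hx, v.map_one, htop, WithTop.top_add] at h1
  exact (by simp : (0 : WithTop Γ) ≠ ⊤) h1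

/-- Ultrametric exactness: if `v P < v Q` then `v (P + Q) = v P`. -/
lemma AddValuation.map_add_eq_left {P Q : K} (h : v P < v Q) : v (P + Q) = v P := by
  refine le_antisymm ?_ ?_
  · by_contra hcon
    push_neg at hcon
    have h3 : min (v (P + Q)) (v (-Q)) ≤ v ((P + Q) + (-Q)) := v.map_add _ _
    rw [v.map_neg, add_neg_cancel_right] at h3
    exact absurd h3 (not_le.2 (lt_min hcon h))
  · have h3 := v.map_add P Q
    rwa [min_eq_left h.le] at h3

/-- Valuation of powers, with values written in `Γ`. -/
lemma AddValuation.map_pow_coe {x : K} {α : Γ} (m : ℕ) (hx : v x = (α : WithTop Γ)) :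
    v (x ^ m) = ((m • α : Γ) : WithTop Γ) := by
  rw [v.map_pow, hx]
  induction m with
  | zero => simp
  | succ k ih => rw [succ_nsmul, succ_nsmul, WithTop.coe_add, ih]

/-- Cancellation in `WithTop Γ`. -/
lemma WithTop.add_coe_eq_coe_iff' {a : WithTop Γ} {c d : Γ}
    (h : a + (c : WithTop Γ) = (d : WithTop Γ)) : a = ((d - c : Γ) : WithTop Γ) := by
  cases a with
  | top => rw [WithTop.top_add] at h; exact absurd h (by simp)
  | coe b =>
    rw [← WithTop.coe_add, WithTop.coe_eq_coe] at h
    rw [WithTop.coe_eq_coe]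
    rw [← h, add_sub_cancel_right]

end Aux

/-- If `(K, Γ, k; v)` is an extremal valued field, then for every nonzero convex
subgroup `Δ` of `Γ` the quotient `Γ/Δ` is divisible. -/
theorem quotient_divisible_of_extremal {K Γ : Type*} [Field K]
    [AddCommGroup Γ] [LinearOrder Γ] [IsOrderedAddMonoid Γ] (v : AddValuation K (WithTop Γ))
    (hsurj : ∀ γ : Γ, ∃ x : K, v x = (γ : WithTop Γ))
    (hext : IsExtremal v)
    (Δ : AddSubgroup Γ) (hΔ : Δ ≠ ⊥)
    (hconv : ∀ γ δ : Γ, δ ∈ Δ → 0 ≤ γ → γ ≤ δ → γ ∈ Δ) :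
    ∀ (x : Γ ⧸ Δ) (n : ℕ), 0 < n → ∃ y : Γ ⧸ Δ, n • y = x := by
  classical
  -- A positive element of Δ
  obtain ⟨d, hdΔ, hd0⟩ : ∃ d, d ∈ Δ ∧ d ≠ 0 := by
    by_contra hcon
    push_neg at hcon
    exact hΔ ((AddSubgroup.eq_bot_iff_forall Δ).2 fun x hx => hcon x hx)
  have hδΔ : |d| ∈ Δ := by
    rcases abs_choice d with h | h
    · rw [h]; exact hdΔ
    · rw [h]; exact Δ.neg_mem hdΔ
  have hδ0 : 0 < |d| := abs_pos.mpr hd0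
  set δ : Γ := |d| with hδdef
  -- Elements of Δ are smaller than any positive element not in Δ
  have small : ∀ ξ : Γ, 0 < ξ → ξ ∉ Δ → ∀ e ∈ Δ, e < ξ := by
    intro ξ hξ hξΔ e heΔ
    by_contra hcon
    push_neg at hcon
    exact hξΔ (hconv ξ e heΔ hξ.le hcon)
  -- Main claim: every positive γ that is not n-divisible mod Δ yields a contradiction
  have key : ∀ n : ℕ, 2 ≤ n → ∀ γ : Γ, 0 < γ → (∀ α : Γ, γ - n • α ∉ Δ) → False := by
    intro n hn γ hγpos H
    have hγΔ : γ ∉ Δ := by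
      have := H 0
      simpa using this
    have hδγ : δ < γ := small γ hγpos hγΔ δ hδΔ
    -- chain step
    have step : ∀ α : Γ, 0 ≤ α → n • α < γ → 0 ≤ α + δ ∧ n • (α + δ) < γ := by
      intro α hα hlt
      have h1 : 0 < γ - n • α := sub_pos.2 hlt
      have h2 : γ - n • α ∉ Δ := H α
      have h3 : n • δ ∈ Δ := AddSubgroup.nsmul_mem Δ hδΔ n
      have h4 : n • δ < γ - n • α := small _ h1 h2 _ h3
      refine ⟨add_nonneg hα hδ0.le, ?_⟩
      have h5 : n • (α + δ) = n • α + n • δ := smul_add n α δ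
      have h6 := lt_sub_iff_add_lt.mp h4
      rw [add_comm (n • δ) (n • α)] at h6
      rw [h5]; exact h6
    -- 2γ ≤ nγ
    have h2γ : γ + γ ≤ n • γ := by
      obtain ⟨m, rfl⟩ : ∃ m, n = m + 2 := ⟨n - 2, by omega⟩
      have h6 : (m + 2) • γ = m • γ + (γ + γ) := by
        rw [add_nsmul, two_nsmul]
      have h7 : 0 ≤ m • γ := nsmul_nonneg hγpos.le m
      rw [h6]; exact le_add_of_nonneg_left h7
    -- the two constants
    obtain ⟨g, hg⟩ := hsurj γ
    have hgne : g ≠ 0 := by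
      intro h; rw [h, v.map_zero] at hg; exact WithTop.top_ne_coe hg
    set w : Γ := δ + γ - n • γ - n • γ with hwdef
    obtain ⟨cc, hc⟩ := hsurj w
    -- the test polynomial as a function
    set E : K → K → K := fun x y => x ^ n + cc * (x ^ n * y - g) ^ n with hE
    -- value of the penalty term when the inner value is known
    have hpen : ∀ z : K, ∀ ρ : Γ, v z = (ρ : WithTop Γ) →
        v (cc * z ^ n) = ((w + n • ρ : Γ) : WithTop Γ) := by
      intro z ρ hz
      rw [v.map_mul, hc, v.map_pow_coe n hz, ← WithTop.coe_add]
    -- w + n•γ is negative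
    have hwneg : w + n • γ < 0 := by
      have h9 : w + n • γ = δ + γ - n • γ := by rw [hwdef]; abel
      rw [h9, sub_neg]
      exact lt_of_lt_of_le (add_lt_add_of_lt_of_le hδγ (le_refl γ)) h2γ
    -- Lemma B : chain values are achieved
    have lemB : ∀ α : Γ, 0 ≤ α → n • α < γ →
        ∃ x y : K, 0 ≤ v x ∧ 0 ≤ v y ∧ v (E x y) = ((n • (α + δ) : Γ) : WithTop Γ) := by
      intro α hα hlt
      obtain ⟨hα'0, hα'lt⟩ := step α hα hlt
      obtain ⟨x, hx⟩ := hsurj (α + δ)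
      have hxne : x ≠ 0 := by
        intro h; rw [h, v.map_zero] at hx; exact WithTop.top_ne_coe hx
      have hxpow : x ^ n ≠ 0 := pow_ne_zero _ hxne
      refine ⟨x, g * (x ^ n)⁻¹, ?_, ?_, ?_⟩
      · rw [hx]; exact_mod_cast hα'0
      · have hyx : g * (x ^ n)⁻¹ * x ^ n = g := by field_simp
        have h1 : v (g * (x ^ n)⁻¹) + ((n • (α + δ) : Γ) : WithTop Γ) = (γ : WithTop Γ) := by
          rw [← v.map_pow_coe n hx, ← v.map_mul, hyx, hg]
        have h2 := WithTop.add_coe_eq_coe_iff' h1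
        rw [h2]
        have h3 : (0 : Γ) ≤ γ - n • (α + δ) := sub_nonneg.mpr hα'lt.le
        exact_mod_cast h3
      · have hzero : x ^ n * (g * (x ^ n)⁻¹) - g = 0 := by field_simp; ring
        have hEeq : E x (g * (x ^ n)⁻¹) = x ^ n := by
          simp only [hE]
          rw [hzero, zero_pow (by omega : n ≠ 0), mul_zero, add_zero]
        rw [hEeq, v.map_pow_coe n hx]
    -- Lemma A : every value is dominated by a chain value
    have lemA : ∀ x y : K, 0 ≤ v x → 0 ≤ v y →
        ∃ α : Γ, 0 ≤ α ∧ n • α < γ ∧ v (E x y) ≤ ((n • α : Γ) : WithTop Γ) := by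
      intro x y hvx hvy
      have hzerochain : (0:Γ) ≤ 0 ∧ n • (0:Γ) < γ := ⟨le_refl _, by rw [smul_zero]; exact hγpos⟩
      by_cases hx0 : x = 0
      · -- E 0 y = cc * (-g)^n
        have hE0 : E x y = cc * (-g) ^ n := by
          simp only [hE]
          rw [hx0, zero_pow (by omega : n ≠ 0), zero_mul, zero_sub, zero_add]
        have hvg : v (-g) = (γ : WithTop Γ) := by rw [v.map_neg, hg]
        refine ⟨0, hzerochain.1, hzerochain.2, ?_⟩
        rw [hE0, hpen (-g) γ hvg, smul_zero]
        exact_mod_cast hwneg.le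
      · obtain ⟨α, hα⟩ := WithTop.ne_top_iff_exists.1 (v.ne_top_of_ne_zero hx0)
        have hα' : v x = (α : WithTop Γ) := hα.symm
        have hα0 : 0 ≤ α := by
          have := hvx; rw [hα'] at this; exact_mod_cast this
        have hxpowv : v (x ^ n) = ((n • α : Γ) : WithTop Γ) := v.map_pow_coe n hα'
        rcases lt_trichotomy (n • α) γ with hlt | heq | hgt
        · -- good region
          by_cases hD0 : x ^ n * y - g = 0
          · have hEeq : E x y = x ^ n := by
              rw [hE]
              simp only []
              rw [hD0, zero_pow (by omega : n ≠ 0), mul_zero, add_zero]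
            exact ⟨α, hα0, hlt, le_of_eq (by rw [hEeq, hxpowv])⟩
          · obtain ⟨ρ, hρ⟩ := WithTop.ne_top_iff_exists.1 (v.ne_top_of_ne_zero hD0)
            have hρ' : v (x ^ n * y - g) = (ρ : WithTop Γ) := hρ.symm
            have hBv : v (cc * (x ^ n * y - g) ^ n) = ((w + n • ρ : Γ) : WithTop Γ) :=
              hpen _ ρ hρ'
            -- no tie possible
            have hne : ((n • α : Γ) : WithTop Γ) ≠ ((w + n • ρ : Γ) : WithTop Γ) := by
              rw [Ne, WithTop.coe_eq_coe]
              intro htie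
              apply H (α + γ + γ - ρ)
              have hexp : n • (α + γ + γ - ρ) = n • α + n • γ + n • γ - n • ρ := by
                rw [smul_sub, smul_add, smul_add]
              have h10 : γ - n • (α + γ + γ - ρ) = -δ := by
                rw [hexp, htie, hwdef]
                abel
              rw [h10]
              exact Δ.neg_mem hδΔ
            rcases lt_or_gt_of_ne hne with hAB | hAB
            · -- A < B : value is A
              have h11 : v (E x y) = v (x ^ n) := by
                simp only [hE]
                exact v.map_add_eq_left (by rw [hxpowv, hBv]; exact hAB)
              exact ⟨α, hα0, hlt, le_of_eq (by rw [h11, hxpowv])⟩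
            · -- B < A : value is B < A
              have hval : v (E x y) = v (cc * (x ^ n * y - g) ^ n) := by
                simp only [hE]
                rw [add_comm]
                exact v.map_add_eq_left (by rw [hxpowv, hBv]; exact hAB)
              refine ⟨α, hα0, hlt, ?_⟩
              rw [hval, hBv, ← hxpowv]
              rw [hxpowv]
              exact le_of_lt (by exact_mod_cast hAB)
        · -- n•α = γ impossible
          exfalso
          apply H α
          rw [← heq, sub_self]
          exact Δ.zero_mem
        · -- bad region : n•α > γ
          have hprod : (γ : WithTop Γ) < v (x ^ n * y) := by
            rw [v.map_mul, hxpowv]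
            calc (γ : WithTop Γ) < ((n • α : Γ) : WithTop Γ) := by exact_mod_cast hgt
            _ ≤ ((n • α : Γ) : WithTop Γ) + v y := le_add_of_nonneg_right hvy
          have hvg : v (-g) = (γ : WithTop Γ) := by rw [v.map_neg, hg]
          have hDv : v (x ^ n * y - g) = (γ : WithTop Γ) := by
            rw [sub_eq_neg_add]
            rw [← hvg]
            exact v.map_add_eq_left (by rw [hvg]; exact hprod)
          have hBv : v (cc * (x ^ n * y - g) ^ n) = ((w + n • γ : Γ) : WithTop Γ) :=
            hpen _ γ hDv
          have hBA : v (cc * (x ^ n * y - g) ^ n) < v (x ^ n) := by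
            rw [hBv, hxpowv]
            have h8 : w + n • γ < n • α :=
              lt_of_lt_of_le hwneg (nsmul_nonneg hα0 n)
            exact_mod_cast h8
          have hval : v (E x y) = v (cc * (x ^ n * y - g) ^ n) := by
            simp only [hE]
            rw [add_comm]
            exact v.map_add_eq_left hBA
          refine ⟨0, hzerochain.1, hzerochain.2, ?_⟩
          rw [hval, hBv, smul_zero]
          exact_mod_cast hwneg.le
    -- the polynomial
    set F : MvPolynomial (Fin 2) K :=
      (MvPolynomial.X 0) ^ n +
        MvPolynomial.C cc * ((MvPolynomial.X 0) ^ n * MvPolynomial.X 1 - MvPolynomial.C g) ^ n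
      with hF
    obtain ⟨a, ha0, hamax⟩ := hext 2 F
    have hevala : ∀ b : Fin 2 → K, MvPolynomial.eval b F = E (b 0) (b 1) := by
      intro b
      simp only [hF, hE]
      simp
    obtain ⟨α₀, hα₀0, hα₀lt, hα₀bd⟩ := lemA (a 0) (a 1) (ha0 0) (ha0 1)
    obtain ⟨x, y, hvx, hvy, hval⟩ := lemB α₀ hα₀0 hα₀lt
    have hb : ∀ i : Fin 2, 0 ≤ v (![x, y] i) := by
      intro i
      fin_cases i
      · simpa using hvx
      · simpa using hvy
    have hle := hamax ![x, y] hb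
    rw [hevala, hevala] at hle
    simp only [Matrix.cons_val_zero, Matrix.cons_val_one, Matrix.head_cons] at hle
    have hlt2 : v (E (a 0) (a 1)) < v (E x y) := by
      rw [hval]
      refine lt_of_le_of_lt hα₀bd ?_
      rw [WithTop.coe_lt_coe]
      have h5 : n • (α₀ + δ) = n • α₀ + n • δ := smul_add n α₀ δ
      have h6 : 0 < n • δ := nsmul_pos hδ0 (by omega : n ≠ 0)
      rw [h5]; exact lt_add_of_pos_right _ h6
    exact absurd hle (not_le.2 hlt2)
  -- From the key claim : full divisibility statement in Γ
  have good : ∀ γ : Γ, ∀ n : ℕ, 0 < n → ∃ α : Γ, γ - n • α ∈ Δ := by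
    intro γ n hn
    by_contra Hc
    push_neg at Hc
    rcases Nat.lt_or_ge n 2 with h1 | h2
    · -- n = 1
      have hn1 : n = 1 := by omega
      apply Hc γ
      rw [hn1, one_smul, sub_self]
      exact Δ.zero_mem
    · rcases lt_trichotomy 0 γ with hpos | hzero | hneg
      · exact key n h2 γ hpos Hc
      · apply Hc 0
        rw [smul_zero, ← hzero, sub_self]
        exact Δ.zero_mem
      · refine key n h2 (-γ) (neg_pos.mpr hneg) ?_
        intro α hmem
        apply Hc (-α)
        have h12 : γ - n • (-α) = -(-γ - n • α) := by rw [smul_neg]; abel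
        rw [h12]
        exact Δ.neg_mem hmem
  -- conclude for the quotient
  intro x n hn
  obtain ⟨γ, rfl⟩ := QuotientAddGroup.mk_surjective x
  obtain ⟨α, hα⟩ := good γ n hn
  refine ⟨QuotientAddGroup.mk α, ?_⟩
  have h1 : (n • (QuotientAddGroup.mk α : Γ ⧸ Δ)) = QuotientAddGroup.mk (n • α) := by
    exact ((QuotientAddGroup.mk' Δ).map_nsmul n α).symm
  rw [h1]
  rw [QuotientAddGroup.eq_iff_sub_mem]
  have h13 : n • α - γ = -(γ - n • α) := by abel
  rw [h13]
  exact Δ.neg_mem hα
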